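/- arXiv:1006.3526 — 4 statements merged into one kernel-verified Lean document; each statement's English description precedes it below -/
import Mathlib

section
/- For μ ∈ ℂ with μ ≠ 0, the function f(z) = 1 - exp(μ log(1 - z)) (with the principal branch of log, so f(0) = 0) is univalent on the unit disk if and only if |μ + 1| ≤ 1 or |μ - 1| ≤ 1. -/
open Complex Metric Set

private lemma cond_iff_re_inv (μ : ℂ) (hμ : μ ≠ 0) :
    (‖μ + 1‖ ≤ 1 ∨ ‖μ - 1‖ ≤ 1) ↔ 1/2 ≤ |(μ⁻¹).re| := by
  have hs : 0 < Complex.normSq μ := Complex.normSq_pos.2 hμ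
  have key : |(μ⁻¹).re| = |μ.re| / Complex.normSq μ := by
    rw [Complex.inv_re, abs_div, abs_of_pos hs]
  have e1 : ‖μ+1‖^2 = Complex.normSq μ + 2*μ.re + 1 := by
    rw [Complex.sq_norm]; simp [Complex.normSq_apply]; ring
  have e2 : ‖μ-1‖^2 = Complex.normSq μ - 2*μ.re + 1 := by
    rw [Complex.sq_norm]; simp [Complex.normSq_apply]; ring
  rw [key, le_div_iff₀ hs, le_abs]
  constructor
  · rintro (h|h)
    · right; nlinarith [norm_nonneg (μ+1)]
    · left; nlinarith [norm_nonneg (μ-1)]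
  · rintro (h|h)
    · right; nlinarith [norm_nonneg (μ-1)]
    · left; nlinarith [norm_nonneg (μ+1)]

private lemma mem_ball_aux (x y : ℝ) (h : Real.exp x < 2 * Real.cos y) :
    (1 - Complex.exp (x + y*I)) ∈ ball (0:ℂ) 1 := by
  rw [mem_ball_zero_iff]
  have hre : (Complex.exp (x + y*I)).re = Real.exp x * Real.cos y := by
    rw [Complex.exp_re]; simp
  have him : (Complex.exp (x + y*I)).im = Real.exp x * Real.sin y := by
    rw [Complex.exp_im]; simp
  have h2 : ‖1 - Complex.exp (x+y*I)‖^2 < 1 := by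
    rw [Complex.sq_norm, Complex.normSq_apply]
    simp only [Complex.sub_re, Complex.sub_im, Complex.one_re, Complex.one_im, hre, him]
    nlinarith [Real.sin_sq_add_cos_sq y, Real.exp_pos x,
      mul_lt_mul_of_pos_left h (Real.exp_pos x), sq_nonneg (Real.sin y)]
  nlinarith [norm_nonneg (1 - Complex.exp (x+y*I))]

private lemma re_pos_of_mem {z : ℂ} (hz : z ∈ ball (0:ℂ) 1) : 0 < (1 - z).re := by
  rw [mem_ball_zero_iff] at hz
  have h1 : |z.re| ≤ ‖z‖ := Complex.abs_re_le_norm z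
  have : z.re < 1 := lt_of_le_of_lt (le_trans (le_abs_self _) h1) hz
  simp [Complex.sub_re]; linarith

/-- For `μ ≠ 0`, `f(z) = 1 - exp(μ log(1-z))` is univalent on the unit disk iff
`|μ+1| ≤ 1` or `|μ-1| ≤ 1`. -/
theorem royster_univalence (μ : ℂ) (hμ : μ ≠ 0) :
    InjOn (fun z : ℂ => 1 - Complex.exp (μ * Complex.log (1 - z))) (ball (0:ℂ) 1) ↔
      (‖μ + 1‖ ≤ 1 ∨ ‖μ - 1‖ ≤ 1) := by
  rw [cond_iff_re_inv μ hμ]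
  have hπ : (0:ℝ) < Real.pi := Real.pi_pos
  constructor
  · -- injective → 1/2 ≤ |(μ⁻¹).re|, by contraposition
    intro hinj
    by_contra hcon
    push_neg at hcon
    -- construct two points
    set r : ℝ := (μ⁻¹).re with hr
    set t : ℂ := 2 * Real.pi * I / μ with ht
    have htim : t.im = 2 * Real.pi * r := by
      rw [ht, div_eq_mul_inv]
      simp [Complex.mul_im, Complex.mul_re]
      rw [hr, Complex.inv_re]
    have htne : t ≠ 0 := by
      rw [ht]
      apply div_ne_zero _ hμ
      simp [Real.pi_ne_zero, Complex.I_ne_zero]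
    set b : ℝ := t.im with hb
    set a : ℝ := t.re with ha
    have hblt : |b| < Real.pi := by
      rw [htim]
      rw [abs_mul, abs_of_pos (by linarith : (0:ℝ) < 2*Real.pi)]
      calc 2*Real.pi * |r| < 2*Real.pi * (1/2) := by
            apply mul_lt_mul_of_pos_left hcon (by linarith)
        _ = Real.pi := by ring
    set y : ℝ := b / 2 with hy
    have hy2 : |y| < Real.pi / 2 := by rw [hy, abs_div]; simp; linarith [abs_nonneg b]
    have hcos : 0 < Real.cos y := by
      apply Real.cos_pos_of_mem_Ioo
      constructor <;> [linarith [neg_abs_le y]; linarith [le_abs_self y]]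
    set c : ℝ := Real.log (2 * Real.cos y) with hc
    set x₁ : ℝ := c - 1 + min a 0 with hx1
    set x₂ : ℝ := x₁ - a with hx2
    have hx1lt : x₁ < c := by
      have := min_le_right a 0; rw [hx1]; linarith
    have hx2lt : x₂ < c := by
      have := min_le_left a 0; rw [hx2, hx1]; linarith
    have hexp : ∀ x : ℝ, x < c → Real.exp x < 2 * Real.cos y := by
      intro x hx
      calc Real.exp x < Real.exp c := Real.exp_lt_exp.2 hx
        _ = 2 * Real.cos y := Real.exp_log (by linarith)
    set u₁ : ℂ := (x₁:ℝ) + y*I with hu1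
    set u₂ : ℂ := ((x₂:ℝ):ℂ) + ((-y : ℝ):ℂ)*I with hu2
    have hu1im : u₁.im = y := by simp [hu1]
    have hu2im : u₂.im = -y := by simp [hu2]
    have hu1re : u₁.re = x₁ := by simp [hu1]
    have hu2re : u₂.re = x₂ := by simp [hu2]
    have hdiff : u₁ - u₂ = t := by
      have h1 : u₁ - u₂ = ((x₁ - x₂ : ℝ) : ℂ) + ((2*y : ℝ):ℂ)*I := by
        rw [hu1, hu2]; push_cast; ring
      rw [h1]
      have : x₁ - x₂ = a := by rw [hx2]; ring
      rw [this]
      have : (2*y : ℝ) = b := by rw [hy]; ring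
      rw [this, ha, hb, Complex.re_add_im]
    set z₁ : ℂ := 1 - Complex.exp u₁ with hz1
    set z₂ : ℂ := 1 - Complex.exp u₂ with hz2
    have hz1m : z₁ ∈ ball (0:ℂ) 1 := mem_ball_aux x₁ y (hexp _ hx1lt)
    have hz2m : z₂ ∈ ball (0:ℂ) 1 := by
      have : Real.cos (-y) = Real.cos y := Real.cos_neg y
      exact mem_ball_aux x₂ (-y) (by rw [this]; exact hexp _ hx2lt)
    have hw1 : 1 - z₁ = Complex.exp u₁ := by rw [hz1]; ring
    have hw2 : 1 - z₂ = Complex.exp u₂ := by rw [hz2]; ring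
    have hlog1 : Complex.log (1 - z₁) = u₁ := by
      rw [hw1]; exact Complex.log_exp (by rw [hu1im]; linarith [neg_abs_le y]) (by rw [hu1im]; linarith [le_abs_self y])
    have hlog2 : Complex.log (1 - z₂) = u₂ := by
      rw [hw2]; exact Complex.log_exp (by rw [hu2im]; linarith [le_abs_self y]) (by rw [hu2im]; linarith [neg_abs_le y])
    have hfeq : 1 - Complex.exp (μ * Complex.log (1 - z₁)) = 1 - Complex.exp (μ * Complex.log (1 - z₂)) := by
      rw [hlog1, hlog2]
      congr 1
      have : μ * u₁ = μ * u₂ + 2 * Real.pi * I := by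
        have : μ * (u₁ - u₂) = 2 * Real.pi * I := by
          rw [hdiff, ht, mul_div_cancel₀ _ hμ]
        linear_combination this
      rw [this, Complex.exp_add, Complex.exp_two_pi_mul_I, mul_one]
    have hzne : z₁ ≠ z₂ := by
      intro hcontra
      have hexpeq : Complex.exp u₁ = Complex.exp u₂ := by
        rw [hz1, hz2] at hcontra
        linear_combination -hcontra
      rw [Complex.exp_eq_exp_iff_exists_int] at hexpeq
      obtain ⟨n, hn⟩ := hexpeq
      have htn : t = n * (2 * Real.pi * I) := by rw [← hdiff]; linear_combination hn
      have him2 : t.im = n * (2 * Real.pi) := by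
        rw [htn]; simp [Complex.mul_im, Complex.mul_re]; try ring
      have : |(n:ℝ)| * (2*Real.pi) < Real.pi := by
        have := hblt
        rw [hb] at this
        rw [him2] at this
        rw [abs_mul, abs_of_pos (by linarith : (0:ℝ) < 2*Real.pi)] at this
        exact this
      have hn0 : n = 0 := by
        by_contra hn0
        have : (1:ℝ) ≤ |(n:ℝ)| := by
          rw [← Int.cast_abs]
          exact_mod_cast Int.one_le_abs hn0
        nlinarith
      rw [hn0] at htn
      simp at htn
      exact htne htn
    exact hzne (hinj hz1m hz2m hfeq)
  · -- 1/2 ≤ |(μ⁻¹).re| → injective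
    intro hcond z₁ hz1 z₂ hz2 hfeq
    simp only at hfeq
    have hfe : Complex.exp (μ * Complex.log (1 - z₁)) = Complex.exp (μ * Complex.log (1 - z₂)) := by
      linear_combination -hfeq
    rw [Complex.exp_eq_exp_iff_exists_int] at hfe
    obtain ⟨n, hn⟩ := hfe
    have hre1 : 0 < (1 - z₁).re := re_pos_of_mem hz1
    have hre2 : 0 < (1 - z₂).re := re_pos_of_mem hz2
    have hne1 : (1 - z₁) ≠ 0 := fun h => by simp [h] at hre1
    have hne2 : (1 - z₂) ≠ 0 := fun h => by simp [h] at hre2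
    have harg1 : |(Complex.log (1 - z₁)).im| < Real.pi / 2 := by
      rw [Complex.log_im]
      exact Complex.abs_arg_lt_pi_div_two_iff.2 (Or.inl hre1)
    have harg2 : |(Complex.log (1 - z₂)).im| < Real.pi / 2 := by
      rw [Complex.log_im]
      exact Complex.abs_arg_lt_pi_div_two_iff.2 (Or.inl hre2)
    have hn0 : n = 0 := by
      by_contra hn0
      have heq : Complex.log (1 - z₁) - Complex.log (1 - z₂) = (n:ℂ) * (2 * Real.pi * I) * μ⁻¹ := by
        field_simp
        linear_combination hn
      have him : (Complex.log (1 - z₁) - Complex.log (1 - z₂)).im = (n:ℝ) * (2 * Real.pi) * (μ⁻¹).re := by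
        rw [heq]
        simp [Complex.mul_im, Complex.mul_re]
        try ring
      have hlt : |(Complex.log (1 - z₁) - Complex.log (1 - z₂)).im| < Real.pi := by
        rw [Complex.sub_im]
        calc |(Complex.log (1 - z₁)).im - (Complex.log (1 - z₂)).im|
            ≤ |(Complex.log (1 - z₁)).im| + |(Complex.log (1 - z₂)).im| := abs_sub _ _
          _ < Real.pi := by linarith
      rw [him] at hlt
      rw [abs_mul, abs_mul, abs_of_pos (by linarith : (0:ℝ) < 2*Real.pi)] at hlt
      have h1 : (1:ℝ) ≤ |(n:ℝ)| := by
        rw [← Int.cast_abs]; exact_mod_cast Int.one_le_abs hn0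
      nlinarith [mul_le_mul h1 hcond (by linarith : (0:ℝ) ≤ 1/2) (abs_nonneg ((n:ℝ)))]
    rw [hn0] at hn
    simp at hn
    have hlogeq : Complex.log (1 - z₁) = Complex.log (1 - z₂) := by
      rcases hn with h | h
      · exact h
      · exact absurd h hμ
    have : (1:ℂ) - z₁ = 1 - z₂ := by
      rw [← Complex.exp_log hne1, ← Complex.exp_log hne2, hlogeq]
    linear_combination -this
end

section
/- Let Ω ⊆ ℂⁿ be open and connected, and let f, g : Ω → ℂⁿ be holomorphic with Df(z) and Dg(z) invertible for all z ∈ Ω. If Df(z)⁻¹ D²f(z) = Dg(z)⁻¹ D²g(z) as bilinear maps for every z ∈ Ω, then there exist a constant invertible matrix A ∈ GL(n, ℂ) and b ∈ ℂⁿ such that f(z) = A g(z) + b for all z ∈ Ω. -/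
open Complex Set

open Metric intervalIntegral

variable {n : ℕ}

/-- Cauchy-type bound: directional derivative bound from a sup bound on `f`. -/
lemma dirDeriv_bound {Ω : Set (Fin n → ℂ)} (hΩ : IsOpen Ω)
    {f : (Fin n → ℂ) → (Fin n → ℂ)} (hf : DifferentiableOn ℂ f Ω)
    {z₀ : Fin n → ℂ} {r M : ℝ} (hr : 0 < r) (hsub : closedBall z₀ r ⊆ Ω)
    (hM : ∀ x ∈ closedBall z₀ r, ‖f x‖ ≤ M)
    {w : Fin n → ℂ} (hw : w ∈ closedBall z₀ (r/2)) (v : Fin n → ℂ) :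
    ‖fderiv ℂ f w v‖ ≤ (4 * M / r) * ‖v‖ := by
  have hM0 : 0 ≤ M := le_trans (norm_nonneg _) (hM z₀ (mem_closedBall_self hr.le))
  rcases eq_or_ne v 0 with rfl | hv
  · simp
  have hvn : 0 < ‖v‖ := norm_pos_iff.2 hv
  set ρ : ℝ := (r/4) / ‖v‖ with hρdef
  have hρ : 0 < ρ := by positivity
  -- the one-variable slice
  set φ : ℂ → (Fin n → ℂ) := fun t => f (w + t • v) with hφdef
  have hmem : ∀ t : ℂ, ‖t‖ ≤ ρ → w + t • v ∈ closedBall z₀ r := by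
    intro t ht
    have : ‖w + t • v - z₀‖ ≤ ‖w - z₀‖ + ‖t • v‖ := by
      have : w + t • v - z₀ = (w - z₀) + t • v := by ring_nf
      rw [this]; exact norm_add_le _ _
    have h2 : ‖t • v‖ ≤ r/4 := by
      rw [norm_smul]
      calc ‖t‖ * ‖v‖ ≤ ρ * ‖v‖ := by gcongr
        _ = r/4 := by rw [hρdef]; field_simp
    have h1 : ‖w - z₀‖ ≤ r/2 := mem_closedBall_iff_norm.1 hw
    rw [mem_closedBall_iff_norm]
    linarith
  have hdiffφ : DifferentiableOn ℂ φ (closedBall 0 ρ) := by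
    intro t ht
    have hmemt : w + t • v ∈ Ω := hsub (hmem t (by simpa [mem_closedBall_iff_norm] using ht))
    have h1 : DifferentiableAt ℂ f (w + t • v) := hf.differentiableAt (hΩ.mem_nhds hmemt)
    exact (h1.comp t (by fun_prop)).differentiableWithinAt
  have hder : HasDerivAt φ (fderiv ℂ f w v) 0 := by
    have hmem0 : w ∈ Ω := hsub (by simpa using hmem 0 (by simp [hρ.le]))
    have h1 : HasFDerivAt f (fderiv ℂ f w) w := (hf.differentiableAt (hΩ.mem_nhds hmem0)).hasFDerivAt
    have h2 : HasDerivAt (fun t : ℂ => w + t • v) v 0 := by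
      simpa using (((hasDerivAt_id (0:ℂ)).smul_const v).const_add w)
    have h1' : HasFDerivAt f (fderiv ℂ f w) ((fun t : ℂ => w + t • v) 0) := by simpa using h1
    exact h1'.comp_hasDerivAt 0 h2
  have hcauchy : ‖deriv φ 0‖ ≤ M / ρ := by
    apply Complex.norm_deriv_le_of_forall_mem_sphere_norm_le hρ
    · apply DifferentiableOn.diffContOnCl
      rwa [closure_ball (0:ℂ) hρ.ne']
    · intro t ht
      have : ‖t‖ = ρ := by simpa using ht
      exact hM _ (hmem t this.le)
  rw [hder.deriv] at hcauchy
  calc ‖fderiv ℂ f w v‖ ≤ M / ρ := hcauchy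
    _ = (4 * M / r) * ‖v‖ := by rw [hρdef]; field_simp

open Complex Set Metric intervalIntegral

variable {n : ℕ}

/-- Directional-derivative function is differentiable (Hartogs-type, via Cauchy integral). -/
lemma dirDeriv_differentiableAt {Ω : Set (Fin n → ℂ)} (hΩ : IsOpen Ω)
    {f : (Fin n → ℂ) → (Fin n → ℂ)} (hf : DifferentiableOn ℂ f Ω)
    {z₀ : Fin n → ℂ} (hz₀ : z₀ ∈ Ω) {u : Fin n → ℂ} (hu : ‖u‖ ≤ 1) :
    DifferentiableAt ℂ (fun z => fderiv ℂ f z u) z₀ := by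
  obtain ⟨r, hr, hsub⟩ : ∃ r > 0, closedBall z₀ r ⊆ Ω :=
    (Metric.nhds_basis_closedBall.mem_iff.1 (hΩ.mem_nhds hz₀)).imp (fun r h => ⟨h.1, h.2⟩)
  obtain ⟨M, hM⟩ := (isCompact_closedBall z₀ r).exists_bound_of_continuousOn
    (hf.continuousOn.mono hsub)
  have hM0 : 0 ≤ M := le_trans (norm_nonneg _) (hM z₀ (mem_closedBall_self hr.le))
  set R : ℝ := r / 4 with hRdef
  have hR : 0 < R := by positivity
  -- derivative bound
  have hK : ∀ w ∈ closedBall z₀ (r/2), ∀ v, ‖fderiv ℂ f w v‖ ≤ (4 * M / r) * ‖v‖ :=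
    fun w hw v => dirDeriv_bound hΩ hf hr hsub hM hw v
  set F : (Fin n → ℂ) → ℝ → (Fin n → ℂ) := fun z θ =>
    (circleMap 0 R θ * I) • ((circleMap 0 R θ) ^ (-2 : ℤ) • f (z + circleMap 0 R θ • u)) with hFdef
  set F' : (Fin n → ℂ) → ℝ → (Fin n → ℂ) →L[ℂ] (Fin n → ℂ) := fun z θ =>
    (circleMap 0 R θ * I) • ((circleMap 0 R θ) ^ (-2 : ℤ) •
      fderiv ℂ f (z + circleMap 0 R θ • u)) with hF'def
  have hmem : ∀ z ∈ ball z₀ R, ∀ t : ℂ, ‖t‖ ≤ R → z + t • u ∈ closedBall z₀ (r/2) := by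
    intro z hz t ht
    have h1 : ‖z - z₀‖ < R := mem_ball_iff_norm.1 hz
    have h2 : ‖t • u‖ ≤ R := by
      rw [norm_smul]
      calc ‖t‖ * ‖u‖ ≤ R * 1 := by
            apply mul_le_mul ht hu (norm_nonneg _) hR.le
        _ = R := mul_one _
    have : z + t • u - z₀ = (z - z₀) + t • u := by ring_nf
    rw [mem_closedBall_iff_norm, this]
    calc ‖(z - z₀) + t • u‖ ≤ ‖z - z₀‖ + ‖t • u‖ := norm_add_le _ _
      _ ≤ r/2 := by rw [hRdef] at h1 h2; linarith
  have hmemΩ : ∀ z ∈ ball z₀ R, ∀ t : ℂ, ‖t‖ ≤ R → z + t • u ∈ Ω := by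
    intro z hz t ht
    apply hsub
    exact closedBall_subset_closedBall (by linarith) (hmem z hz t ht)
  have habs : ∀ θ : ℝ, ‖circleMap 0 R θ‖ = R := by
    intro θ
    simpa [abs_of_pos hR] using Complex.abs_circleMap_zero R θ
  -- representation of the directional derivative as a circle integral
  have hrep : ∀ z ∈ ball z₀ R,
      fderiv ℂ f z u = (2 * Real.pi * I : ℂ)⁻¹ • ∫ θ in (0:ℝ)..(2*Real.pi), F z θ := by
    intro z hz
    set φ : ℂ → (Fin n → ℂ) := fun t => f (z + t • u) with hφdef
    have hd : DiffContOnCl ℂ φ (ball 0 R) := by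
      apply DifferentiableOn.diffContOnCl
      rw [closure_ball (0:ℂ) hR.ne']
      intro t ht
      have htΩ : z + t • u ∈ Ω := hmemΩ z hz t (by simpa [mem_closedBall_iff_norm] using ht)
      exact ((hf.differentiableAt (hΩ.mem_nhds htΩ)).comp t (by fun_prop)).differentiableWithinAt
    have hder : HasDerivAt φ (fderiv ℂ f z u) 0 := by
      have hzΩ : z ∈ Ω := by simpa using hmemΩ z hz 0 (by simp [hR.le])
      have h1 : HasFDerivAt f (fderiv ℂ f z) z := (hf.differentiableAt (hΩ.mem_nhds hzΩ)).hasFDerivAt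
      have h2 : HasDerivAt (fun t : ℂ => z + t • u) u 0 := by
        simpa using (((hasDerivAt_id (0:ℂ)).smul_const u).const_add z)
      have h1' : HasFDerivAt f (fderiv ℂ f z) ((fun t : ℂ => z + t • u) 0) := by simpa using h1
      exact h1'.comp_hasDerivAt 0 h2
    have := hd.deriv_eq_smul_circleIntegral hR
    rw [hder.deriv] at this
    rw [eq_inv_smul_iff₀ (by simp [Real.pi_ne_zero, I_ne_zero]), ← this]
    unfold circleIntegral
    apply intervalIntegral.integral_congr
    intro θ _
    simp only [deriv_circleMap, sub_zero, hFdef, hφdef, one_div, zpow_neg, zpow_ofNat]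
  -- continuity of the integrand
  have hcont : ∀ z ∈ ball z₀ R, Continuous fun θ => F z θ := by
    intro z hz
    have h1 : Continuous fun θ : ℝ => z + circleMap 0 R θ • u := by
      exact continuous_const.add ((continuous_circleMap 0 R).smul continuous_const)
    have h2 : Continuous fun θ : ℝ => f (z + circleMap 0 R θ • u) := by
      apply hf.continuousOn.comp_continuous h1
      intro θ; exact hmemΩ z hz _ (habs θ).le
    have h3 : Continuous fun θ : ℝ => (circleMap 0 R θ) ^ (-2 : ℤ) :=
      (continuous_circleMap 0 R).zpow₀ _ (fun θ => Or.inl (circleMap_ne_center hR.ne'))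
    exact ((continuous_circleMap 0 R).mul continuous_const).smul (h3.smul h2)
  have hballs : ball z₀ (R/2) ⊆ ball z₀ R := ball_subset_ball (by linarith)
  have hKop : ∀ z ∈ ball z₀ (R/2), ∀ θ : ℝ,
      ‖fderiv ℂ f (z + circleMap 0 R θ • u)‖ ≤ 4 * M / r := by
    intro z hz θ
    apply ContinuousLinearMap.opNorm_le_bound _ (by positivity)
    exact fun v => hK _ (hmem z (hballs hz) _ (habs θ).le) v
  have hmemΩ' : ∀ z ∈ ball z₀ (R/2), ∀ θ : ℝ, z + circleMap 0 R θ • u ∈ Ω := by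
    intro z hz θ
    exact hmemΩ z (hballs hz) _ (habs θ).le
  have key : HasFDerivAt (fun z => ∫ θ in (0:ℝ)..(2*Real.pi), F z θ)
      (∫ θ in (0:ℝ)..(2*Real.pi), F' z₀ θ) z₀ := by
    apply intervalIntegral.hasFDerivAt_integral_of_dominated_of_fderiv_le
      (bound := fun _ => R⁻¹ * (4 * M / r)) (s := ball z₀ (R/2)) (ball_mem_nhds z₀ (by positivity))
    · filter_upwards [ball_mem_nhds z₀ hR] with z hz
      exact (hcont z hz).aestronglyMeasurable
    · exact (hcont z₀ (mem_ball_self hR)).intervalIntegrable _ _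
    · have m1 : Measurable fun θ : ℝ => z₀ + circleMap 0 R θ • u :=
        (continuous_const.add ((continuous_circleMap 0 R).smul continuous_const)).measurable
      have m2 := (measurable_fderiv ℂ f).comp m1
      have m3 : Continuous fun θ : ℝ => circleMap 0 R θ * I :=
        (continuous_circleMap 0 R).mul continuous_const
      have m4 : Continuous fun θ : ℝ => (circleMap 0 R θ) ^ (-2 : ℤ) :=
        (continuous_circleMap 0 R).zpow₀ _ (fun θ => Or.inl (circleMap_ne_center hR.ne'))
      exact (m3.aestronglyMeasurable).smul ((m4.aestronglyMeasurable).smul m2.aestronglyMeasurable)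
    · apply Filter.Eventually.of_forall
      intro θ _ z hz
      have hT := hKop z hz θ
      have e1 : ‖F' z θ‖ =
          R * (R ^ (-2 : ℤ) * ‖fderiv ℂ f (z + circleMap 0 R θ • u)‖) := by
        show ‖(circleMap 0 R θ * I) • ((circleMap 0 R θ) ^ (-2 : ℤ) •
            fderiv ℂ f (z + circleMap 0 R θ • u))‖ = _
        rw [norm_smul, norm_smul, norm_zpow, norm_mul, Complex.norm_I, mul_one, habs]
      rw [e1]
      have e2 : (R:ℝ) ^ (-2 : ℤ) = (R^2)⁻¹ := by
        rw [zpow_neg, zpow_two, sq]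
      rw [e2]
      have : R * ((R^2)⁻¹ * ‖fderiv ℂ f (z + circleMap 0 R θ • u)‖) ≤
          R * ((R^2)⁻¹ * (4 * M / r)) := by gcongr
      calc R * ((R^2)⁻¹ * ‖fderiv ℂ f (z + circleMap 0 R θ • u)‖)
          ≤ R * ((R^2)⁻¹ * (4 * M / r)) := this
        _ = R⁻¹ * (4 * M / r) := by field_simp
    · exact intervalIntegrable_const
    · apply Filter.Eventually.of_forall
      intro θ _ z hz
      have hp : z + circleMap 0 R θ • u ∈ Ω := hmemΩ' z hz θ
      have h1 : HasFDerivAt f (fderiv ℂ f (z + circleMap 0 R θ • u))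
          ((fun z => z + circleMap 0 R θ • u) z) :=
        (hf.differentiableAt (hΩ.mem_nhds hp)).hasFDerivAt
      have h2 : HasFDerivAt (fun z : Fin n → ℂ => z + circleMap 0 R θ • u)
          (ContinuousLinearMap.id ℂ _) z := (hasFDerivAt_id z).add_const _
      have h4 : HasFDerivAt (fun z => f (z + circleMap 0 R θ • u))
          (fderiv ℂ f (z + circleMap 0 R θ • u)) z := by
        simpa using h1.comp z h2
      exact (h4.fun_const_smul _).fun_const_smul _
  have heq : (fun z => fderiv ℂ f z u) =ᶠ[nhds z₀]
      fun z => (2 * Real.pi * I : ℂ)⁻¹ • ∫ θ in (0:ℝ)..(2*Real.pi), F z θ := by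
    filter_upwards [ball_mem_nhds z₀ hR] with z hz using hrep z hz
  exact (key.differentiableAt.const_smul ((2 * Real.pi * I : ℂ)⁻¹)).congr_of_eventuallyEq heq


lemma clm_eq_sum_proj (T : (Fin n → ℂ) →L[ℂ] (Fin n → ℂ)) :
    T = ∑ i, (ContinuousLinearMap.proj (R := ℂ) (φ := fun _ : Fin n => ℂ) i).smulRight
      (T (Pi.single i 1)) := by
  ext v
  rw [ContinuousLinearMap.sum_apply]
  simp only [ContinuousLinearMap.smulRight_apply, ContinuousLinearMap.proj_apply]
  have : ∀ i : Fin n, v i • T (Pi.single i 1) = T (Pi.single i (v i)) := by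
    intro i
    rw [← map_smul]
    congr 1
    funext j
    simp [Pi.single_apply]
  simp only [this, ← map_sum]
  rw [Finset.univ_sum_single v]

lemma fderiv_differentiableAt' {Ω : Set (Fin n → ℂ)} (hΩ : IsOpen Ω)
    {f : (Fin n → ℂ) → (Fin n → ℂ)} (hf : DifferentiableOn ℂ f Ω)
    {z₀ : Fin n → ℂ} (hz₀ : z₀ ∈ Ω) :
    DifferentiableAt ℂ (fderiv ℂ f) z₀ := by
  have hrw : (fderiv ℂ f) = fun z => ∑ i,
      (ContinuousLinearMap.proj (R := ℂ) (φ := fun _ : Fin n => ℂ) i).smulRight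
        (fderiv ℂ f z (Pi.single i 1)) := by
    funext z; exact clm_eq_sum_proj (fderiv ℂ f z)
  rw [hrw]
  apply DifferentiableAt.fun_sum
  intro i _
  have hu : ‖(Pi.single i (1:ℂ) : Fin n → ℂ)‖ ≤ 1 := by
    apply (pi_norm_le_iff_of_nonneg zero_le_one).2
    intro j
    rcases eq_or_ne j i with rfl | hj
    · simp
    · simp [Pi.single_apply, hj]
  have hd : DifferentiableAt ℂ (fun z => fderiv ℂ f z (Pi.single i 1)) z₀ :=
    dirDeriv_differentiableAt hΩ hf hz₀ hu
  exact (ContinuousLinearMap.smulRightL ℂ (Fin n → ℂ) (Fin n → ℂ)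
    (ContinuousLinearMap.proj i)).differentiableAt.comp z₀ hd

/-- A function with vanishing derivative on an open preconnected set is constant there. -/
lemma const_of_hasFDerivAt_zero {X : Type*} [NormedAddCommGroup X] [NormedSpace ℂ X]
    {Ω : Set (Fin n → ℂ)} (hΩ : IsOpen Ω) (hconn : IsPreconnected Ω)
    {φ : (Fin n → ℂ) → X} (hφ : ∀ z ∈ Ω, HasFDerivAt φ (0 : (Fin n → ℂ) →L[ℂ] X) z)
    {x y : Fin n → ℂ} (hx : x ∈ Ω) (hy : y ∈ Ω) : φ x = φ y := by
  have hloc : ∀ z ∈ Ω, ∃ ρ > 0, ball z ρ ⊆ Ω ∧ ∀ w ∈ ball z ρ, φ w = φ z := by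
    intro z hz
    obtain ⟨ρ, hρ, hsub⟩ : ∃ ρ > 0, ball z ρ ⊆ Ω :=
      (Metric.nhds_basis_ball.mem_iff.1 (hΩ.mem_nhds hz)).imp (fun ρ h => ⟨h.1, h.2⟩)
    refine ⟨ρ, hρ, hsub, fun w hw => ?_⟩
    apply (convex_ball z ρ).is_const_of_fderivWithin_eq_zero
      (fun w' hw' => ((hφ w' (hsub hw')).differentiableAt).differentiableWithinAt)
      (fun w' hw' => ?_) hw (mem_ball_self hρ)
    rw [fderivWithin_of_isOpen isOpen_ball hw']
    exact (hφ w' (hsub hw')).fderiv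
  by_contra hne
  set U : Set (Fin n → ℂ) := ⋃₀ {t | IsOpen t ∧ t ⊆ Ω ∧ ∀ w ∈ t, φ w = φ x} with hU
  set V : Set (Fin n → ℂ) := ⋃₀ {t | IsOpen t ∧ t ⊆ Ω ∧ ∀ w ∈ t, φ w ≠ φ x} with hV
  have hUo : IsOpen U := isOpen_sUnion (fun t ht => ht.1)
  have hVo : IsOpen V := isOpen_sUnion (fun t ht => ht.1)
  have hcover : Ω ⊆ U ∪ V := by
    intro z hz
    obtain ⟨ρ, hρ, hsub, hconst⟩ := hloc z hz
    rcases eq_or_ne (φ z) (φ x) with he | he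
    · left
      exact ⟨ball z ρ, ⟨isOpen_ball, hsub, fun w hw => (hconst w hw).trans he⟩,
        mem_ball_self hρ⟩
    · right
      exact ⟨ball z ρ, ⟨isOpen_ball, hsub, fun w hw => (hconst w hw).trans_ne he⟩,
        mem_ball_self hρ⟩
  have hxU : x ∈ Ω ∩ U := by
    obtain ⟨ρ, hρ, hsub, hconst⟩ := hloc x hx
    exact ⟨hx, ball x ρ, ⟨isOpen_ball, hsub, hconst⟩, mem_ball_self hρ⟩
  have hyV : y ∈ Ω ∩ V := by
    obtain ⟨ρ, hρ, hsub, hconst⟩ := hloc y hy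
    exact ⟨hy, ball y ρ, ⟨isOpen_ball, hsub,
      fun w hw => (hconst w hw).trans_ne (Ne.symm hne)⟩, mem_ball_self hρ⟩
  obtain ⟨z, hzΩ, hzU, hzV⟩ := hconn U V hUo hVo hcover ⟨x, hxU⟩ ⟨y, hyV⟩
  obtain ⟨t, ⟨_, _, ht⟩, hzt⟩ := hzU
  obtain ⟨t', ⟨_, _, ht'⟩, hzt'⟩ := hzV
  exact ht' z hzt' (ht z hzt)

set_option maxHeartbeats 2000000 in
set_option synthInstance.maxHeartbeats 1000000 in
/-- If two locally biholomorphic maps on a connected open set have equal pre-Schwarzians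
`Df⁻¹D²f = Dg⁻¹D²g`, then `f = A ∘ g + b` for a constant invertible `A` and `b ∈ ℂⁿ`. -/
theorem preSchwarzian_eq_iff_affine (n : ℕ)
    (Ω : Set (Fin n → ℂ)) (hΩ : IsOpen Ω) (hconn : IsConnected Ω)
    (f g : (Fin n → ℂ) → (Fin n → ℂ))
    (hf : DifferentiableOn ℂ f Ω) (hg : DifferentiableOn ℂ g Ω)
    (hfinv : ∀ z ∈ Ω, ∃ e : (Fin n → ℂ) ≃L[ℂ] (Fin n → ℂ),
      (e : (Fin n → ℂ) →L[ℂ] (Fin n → ℂ)) = fderiv ℂ f z)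
    (hginv : ∀ z ∈ Ω, ∃ e : (Fin n → ℂ) ≃L[ℂ] (Fin n → ℂ),
      (e : (Fin n → ℂ) →L[ℂ] (Fin n → ℂ)) = fderiv ℂ g z)
    (hpre : ∀ z ∈ Ω, ∀ u v : Fin n → ℂ,
      (fderiv ℂ f z).inverse (fderiv ℂ (fderiv ℂ f) z u v) =
      (fderiv ℂ g z).inverse (fderiv ℂ (fderiv ℂ g) z u v)) :
    ∃ (A : (Fin n → ℂ) ≃L[ℂ] (Fin n → ℂ)) (b : Fin n → ℂ),
      ∀ z ∈ Ω, f z = A (g z) + b := by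
  classical
  obtain ⟨z₀, hz₀⟩ := hconn.nonempty
  obtain ⟨ef₀, hef₀⟩ := hfinv z₀ hz₀
  obtain ⟨eg₀, heg₀⟩ := hginv z₀ hz₀
  set φ : (Fin n → ℂ) → ((Fin n → ℂ) →L[ℂ] (Fin n → ℂ)) :=
    fun z => (fderiv ℂ f z).comp (Ring.inverse (fderiv ℂ g z)) with hφdef
  have hφ0 : ∀ z ∈ Ω, HasFDerivAt φ
      (0 : (Fin n → ℂ) →L[ℂ] ((Fin n → ℂ) →L[ℂ] (Fin n → ℂ))) z := by
    intro z hz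
    obtain ⟨ef, hef⟩ := hfinv z hz
    obtain ⟨eg, heg⟩ := hginv z hz
    have hF : HasFDerivAt (fderiv ℂ f) (fderiv ℂ (fderiv ℂ f) z) z :=
      (fderiv_differentiableAt' hΩ hf hz).hasFDerivAt
    have hG : HasFDerivAt (fderiv ℂ g) (fderiv ℂ (fderiv ℂ g) z) z :=
      (fderiv_differentiableAt' hΩ hg hz).hasFDerivAt
    have hegU : ((eg.toUnit : (Fin n → ℂ) →L[ℂ] (Fin n → ℂ))) = fderiv ℂ g z := heg
    have hunit := hasFDerivAt_ringInverse (𝕜 := ℂ) eg.toUnit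
    rw [hegU] at hunit
    have hinv := hunit.comp z hG
    have hBg : Ring.inverse (fderiv ℂ g z) =
        ((eg.symm : (Fin n → ℂ) →L[ℂ] (Fin n → ℂ))) := by
      rw [← heg, ContinuousLinearMap.ringInverse_equiv, ContinuousLinearMap.inverse_equiv]
    have hinvU : ((eg.toUnit⁻¹ : ((Fin n → ℂ) →L[ℂ] (Fin n → ℂ))ˣ) :
        (Fin n → ℂ) →L[ℂ] (Fin n → ℂ)) = (eg.symm : (Fin n → ℂ) →L[ℂ] (Fin n → ℂ)) := rfl
    have hpre' : ∀ u w : Fin n → ℂ,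
        fderiv ℂ (fderiv ℂ f) z u w =
          ef (eg.symm (fderiv ℂ (fderiv ℂ g) z u w)) := by
      intro u w
      have h1 := hpre z hz u w
      rw [← hef, ← heg, ContinuousLinearMap.inverse_equiv,
        ContinuousLinearMap.inverse_equiv] at h1
      have h2 := congrArg ef h1
      simpa using h2
    have hcomp := hF.clm_comp hinv
    refine hcomp.congr_fderiv ?_
    ext u v
    simp only [ContinuousLinearMap.add_apply, ContinuousLinearMap.coe_comp', Function.comp_apply,
      ContinuousLinearMap.compL_apply, ContinuousLinearMap.flip_apply,
      ContinuousLinearMap.neg_apply, ContinuousLinearMap.mulLeftRight_apply,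
      ContinuousLinearMap.zero_apply, Pi.zero_apply, hinvU, hBg,
      ContinuousLinearMap.mul_apply, ContinuousLinearMap.coe_coe]
    rw [hpre']
    rw [← hef]
    simp [map_neg]
  have hconst : ∀ z ∈ Ω, φ z = φ z₀ := fun z hz =>
    const_of_hasFDerivAt_zero hΩ hconn.isPreconnected hφ0 hz hz₀
  set A : (Fin n → ℂ) ≃L[ℂ] (Fin n → ℂ) := eg₀.symm.trans ef₀ with hAdef
  have hAcoe : ((A : (Fin n → ℂ) →L[ℂ] (Fin n → ℂ))) = φ z₀ := by
    have hBg : Ring.inverse (fderiv ℂ g z₀) =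
        ((eg₀.symm : (Fin n → ℂ) →L[ℂ] (Fin n → ℂ))) := by
      rw [← heg₀, ContinuousLinearMap.ringInverse_equiv, ContinuousLinearMap.inverse_equiv]
    rw [hφdef]
    simp only [hBg, ← hef₀, hAdef]
    rfl
  have hDf : ∀ z ∈ Ω, fderiv ℂ f z =
      ((A : (Fin n → ℂ) →L[ℂ] (Fin n → ℂ))).comp (fderiv ℂ g z) := by
    intro z hz
    obtain ⟨eg, heg⟩ := hginv z hz
    have hBg : Ring.inverse (fderiv ℂ g z) =
        ((eg.symm : (Fin n → ℂ) →L[ℂ] (Fin n → ℂ))) := by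
      rw [← heg, ContinuousLinearMap.ringInverse_equiv, ContinuousLinearMap.inverse_equiv]
    have h1 : φ z = (A : (Fin n → ℂ) →L[ℂ] (Fin n → ℂ)) := (hconst z hz).trans hAcoe.symm
    refine ContinuousLinearMap.ext fun v => ?_
    have h2 := congrArg (fun T => T (fderiv ℂ g z v)) h1
    simp only [hφdef, ContinuousLinearMap.coe_comp', Function.comp_apply, hBg] at h2
    rw [← heg] at h2
    simp only [ContinuousLinearEquiv.coe_coe, ContinuousLinearEquiv.symm_apply_apply] at h2
    rw [h2, ContinuousLinearMap.comp_apply, ← heg]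
    simp [ContinuousLinearEquiv.coe_coe]
  have hzero : ∀ z ∈ Ω, HasFDerivAt
      (fun w => f w - (A : (Fin n → ℂ) →L[ℂ] (Fin n → ℂ)) (g w))
      (0 : (Fin n → ℂ) →L[ℂ] (Fin n → ℂ)) z := by
    intro z hz
    have h1 : HasFDerivAt f (fderiv ℂ f z) z :=
      (hf.differentiableAt (hΩ.mem_nhds hz)).hasFDerivAt
    have h2 : HasFDerivAt g (fderiv ℂ g z) z :=
      (hg.differentiableAt (hΩ.mem_nhds hz)).hasFDerivAt
    have h3 := ((A : (Fin n → ℂ) →L[ℂ] (Fin n → ℂ)).hasFDerivAt).comp z h2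
    have h4 := h1.sub h3
    rwa [hDf z hz, sub_self] at h4
  refine ⟨A, f z₀ - (A : (Fin n → ℂ) →L[ℂ] (Fin n → ℂ)) (g z₀), fun z hz => ?_⟩
  have hb := const_of_hasFDerivAt_zero hΩ hconn.isPreconnected hzero hz hz₀
  have : f z - (A : (Fin n → ℂ) →L[ℂ] (Fin n → ℂ)) (g z) =
      f z₀ - (A : (Fin n → ℂ) →L[ℂ] (Fin n → ℂ)) (g z₀) := hb
  have h5 : f z = (A : (Fin n → ℂ) →L[ℂ] (Fin n → ℂ)) (g z) +
      (f z₀ - (A : (Fin n → ℂ) →L[ℂ] (Fin n → ℂ)) (g z₀)) := by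
    rw [← this]; abel
  simpa using h5
end

section
/- Let f : Ω → ℂⁿ be holomorphic with invertible derivative on open Ω ⊆ ℂⁿ, and fix α ∈ ℂ. If g, h : Ω → ℂⁿ are holomorphic with invertible derivatives satisfying Dg(z)⁻¹D²g(z) = α·Df(z)⁻¹D²f(z) and Dh(z)⁻¹D²h(z) = α·Df(z)⁻¹D²f(z) on Ω, and g(z₀) = h(z₀), Dg(z₀) = Dh(z₀) at some point z₀ of the connected open set Ω, then g = h on Ω. -/
open Complex Set


open Complex Set Metric MeasureTheory Real
open scoped NNReal

noncomputable section

variable {n : ℕ} {F : Type} [NormedAddCommGroup F] [NormedSpace ℂ F] [FiniteDimensional ℂ F]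

local notation "E" => (Fin n → ℂ)

/-- standard basis as plain function matching `pi_eq_sum_univ` -/
def sb (i : Fin n) : E := fun j => if i = j then 1 else 0

lemma sb_norm_le (i : Fin n) : ‖sb (n := n) i‖ ≤ 1 := by
  refine (pi_norm_le_iff_of_nonneg zero_le_one).2 fun j => ?_
  simp only [sb]
  split <;> simp

/-- Slice derivative: `s ↦ g (z + s • u)` has derivative `fderiv g z' u`. -/
lemma slice_hasDerivAt {g : E → F} {z : E} (u : E) (hz : DifferentiableAt ℂ g z) (s : ℂ) :
    HasDerivAt (fun t : ℂ => g (z + (t - s) • u)) (fderiv ℂ g z u) s := by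
  have h1 : HasDerivAt (fun t : ℂ => z + (t - s) • u) u s := by
    simpa using (((hasDerivAt_id s).sub_const s).smul_const u).const_add z
  have h2 : HasFDerivAt g (fderiv ℂ g z) (z + (s - s) • u) := by
    simpa using hz.hasFDerivAt
  simpa [Function.comp_def] using h2.comp_hasDerivAt s h1

/-- Lemma A: local bound for the derivative of a holomorphic map. -/
lemma loc_bound {Ω : Set E} (hΩ : IsOpen Ω) {g : E → F} (hg : DifferentiableOn ℂ g Ω)
    {z₁ : E} (hz₁ : z₁ ∈ Ω) :
    ∃ r > 0, ∃ C ≥ 0, closedBall z₁ (2*r) ⊆ Ω ∧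
      ∀ z ∈ closedBall z₁ r, ‖fderiv ℂ g z‖ ≤ C := by
  obtain ⟨R, hR0, hRΩ⟩ := (Metric.nhds_basis_closedBall.mem_iff).1 (hΩ.mem_nhds hz₁)
  refine ⟨R/2, by positivity, ?_⟩
  obtain ⟨M, hM⟩ := (isCompact_closedBall z₁ R).exists_bound_of_continuousOn
    (hg.continuousOn.mono hRΩ)
  have hM0 : 0 ≤ M := le_trans (norm_nonneg _) (hM z₁ (mem_closedBall_self hR0.le))
  refine ⟨n * (M / (R/2)), by positivity, by simpa [mul_div_cancel₀] using hRΩ, ?_⟩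
  intro z hzb
  have hzΩ : z ∈ Ω := hRΩ (closedBall_subset_closedBall (by linarith) hzb)
  have hdiff : ∀ i : Fin n, ‖fderiv ℂ g z (sb i)‖ ≤ M / (R/2) := by
    intro i
    -- slice function
    set φ : ℂ → F := fun s => g (z + s • sb i) with hφ
    have hmem : ∀ s : ℂ, ‖s‖ ≤ R/2 → z + s • sb i ∈ closedBall z₁ R := by
      intro s hs
      have : ‖z + s • sb i - z₁‖ ≤ ‖z - z₁‖ + ‖s • sb i‖ := by
        rw [add_sub_right_comm]; exact norm_add_le _ _
      have h2 : ‖s • sb i‖ ≤ R/2 := by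
        rw [norm_smul]
        calc ‖s‖ * ‖sb (n := n) i‖ ≤ (R/2) * 1 :=
          mul_le_mul hs (sb_norm_le i) (norm_nonneg _) (by positivity)
        _ = R/2 := mul_one _
      have h1 : ‖z - z₁‖ ≤ R/2 := mem_closedBall_iff_norm.1 hzb
      simp only [mem_closedBall, dist_eq_norm]
      linarith
    have hφd : DifferentiableOn ℂ φ (closedBall 0 (R/2)) := by
      intro s hs
      have : DifferentiableAt ℂ φ s := by
        have hdg : DifferentiableAt ℂ g (z + s • sb i) :=
          hg.differentiableAt (hΩ.mem_nhds (hRΩ (hmem s (by simpa [mem_closedBall, dist_eq_norm] using hs))))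
        exact (hdg.comp s (by fun_prop))
      exact this.differentiableWithinAt
    have hdc : DiffContOnCl ℂ φ (ball 0 (R/2)) := by
      refine DifferentiableOn.diffContOnCl ?_
      rwa [closure_ball 0 (by positivity : (R/2:ℝ) ≠ 0)]
    have hDA : HasDerivAt φ (fderiv ℂ g z (sb i)) 0 := by
      have := slice_hasDerivAt (g := g) (z := z) (sb i)
        (hg.differentiableAt (hΩ.mem_nhds hzΩ)) 0
      simpa [hφ] using this
    have := norm_deriv_le_of_forall_mem_sphere_norm_le (c := (0:ℂ)) (by positivity : (0:ℝ) < R/2)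
      hdc (C := M) ?_
    · rw [hDA.deriv] at this; exact this
    · intro s hs
      have : ‖s‖ = R/2 := by simpa [dist_eq_norm] using hs
      exact hM _ (hmem s this.le)
  -- assemble operator norm bound
  refine ContinuousLinearMap.opNorm_le_bound _ (by positivity) fun x => ?_
  have hx : fderiv ℂ g z x = ∑ i : Fin n, x i • fderiv ℂ g z (sb i) := by
    conv_lhs => rw [pi_eq_sum_univ x]
    rw [map_sum]
    exact Finset.sum_congr rfl fun i _ => by rw [(fderiv ℂ g z).map_smul]; rfl
  rw [hx]
  calc ‖∑ i : Fin n, x i • fderiv ℂ g z (sb i)‖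
      ≤ ∑ i : Fin n, ‖x i • fderiv ℂ g z (sb i)‖ := norm_sum_le _ _
    _ ≤ ∑ _i : Fin n, ‖x‖ * (M / (R/2)) := by
        refine Finset.sum_le_sum fun i _ => ?_
        rw [norm_smul]
        exact mul_le_mul (norm_le_pi_norm x i) (hdiff i) (norm_nonneg _) (norm_nonneg _)
    _ = n * (M / (R/2)) * ‖x‖ := by
        simp [Finset.sum_const, Finset.card_univ]; ring

variable [CompleteSpace F]

/-- Lemma B: the derivative of a holomorphic map on ℂⁿ is differentiable. -/
lemma fderiv_differentiableAt {Ω : Set E} (hΩ : IsOpen Ω) {g : E → F}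
    (hg : DifferentiableOn ℂ g Ω) {z₁ : E} (hz₁ : z₁ ∈ Ω) :
    DifferentiableAt ℂ (fderiv ℂ g) z₁ := by
  obtain ⟨r, hr0, C, hC0, hsub, hbd⟩ := loc_bound hΩ hg hz₁
  have hrΩ : closedBall z₁ r ⊆ Ω :=
    (closedBall_subset_closedBall (by linarith)).trans hsub
  set ρ : ℝ := r/2 with hρ
  have hρ0 : 0 < ρ := by positivity
  have key : ∀ i : Fin n, DifferentiableAt ℂ (fun z => fderiv ℂ g z (sb i)) z₁ := by
    intro i
    set u : E := sb (n := n) i with hu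
    have hmem : ∀ z ∈ closedBall z₁ ρ, ∀ s : ℂ, ‖s‖ ≤ ρ → z + s • u ∈ closedBall z₁ r := by
      intro z hz s hs
      have h2 : ‖s • u‖ ≤ ρ := by
        rw [norm_smul]
        calc ‖s‖ * ‖u‖ ≤ ρ * 1 := mul_le_mul hs (sb_norm_le i) (norm_nonneg _) hρ0.le
        _ = ρ := mul_one _
      have h1 : ‖z - z₁‖ ≤ ρ := mem_closedBall_iff_norm.1 hz
      have : ‖z + s • u - z₁‖ ≤ ‖z - z₁‖ + ‖s • u‖ := by
        rw [add_sub_right_comm]; exact norm_add_le _ _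
      simp only [mem_closedBall, dist_eq_norm]
      have : ‖z + s • u - z₁‖ ≤ ρ + ρ := by linarith
      linarith [this, (by linarith : ρ + ρ = r)]
    set K : ℝ → ℂ := fun θ => deriv (circleMap 0 ρ) θ * (circleMap 0 ρ θ) ^ (-2 : ℤ) with hK
    have hKcont : Continuous K := by
      rw [hK]
      simp only [deriv_circleMap]
      exact ((continuous_circleMap 0 ρ).mul continuous_const).mul
        ((continuous_circleMap 0 ρ).zpow₀ _ fun θ => Or.inl (circleMap_ne_center hρ0.ne'))
    set μ : Measure ℝ := volume.restrict (Set.Icc 0 (2*π)) with hμ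
    set Fn : E → ℝ → F := fun z θ => K θ • g (z + circleMap 0 ρ θ • u) with hFn
    have habs : ∀ θ : ℝ, ‖circleMap 0 ρ θ‖ ≤ ρ := fun θ => by
      simp [norm_circleMap_zero, abs_of_pos hρ0]
    have hFncont : ∀ z ∈ closedBall z₁ ρ, Continuous (Fn z) := by
      intro z hz
      refine hKcont.smul ?_
      refine (hg.continuousOn.mono hrΩ).comp_continuous (by fun_prop) fun θ => ?_
      exact hmem z hz _ (habs θ)
    set F' : ℝ → E →L[ℂ] F := fun θ => K θ • fderiv ℂ g (z₁ + circleMap 0 ρ θ • u) with hF'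
    have hdgat : ∀ z ∈ closedBall z₁ ρ, ∀ θ : ℝ,
        HasFDerivAt (fun w => Fn w θ) (K θ • fderiv ℂ g (z + circleMap 0 ρ θ • u)) z := by
      intro z hz θ
      have hdg : DifferentiableAt ℂ g (z + circleMap 0 ρ θ • u) :=
        hg.differentiableAt (hΩ.mem_nhds (hrΩ (hmem z hz _ (habs θ))))
      have h1 : HasFDerivAt (fun w : E => w + circleMap 0 ρ θ • u)
          (ContinuousLinearMap.id ℂ E) z := (hasFDerivAt_id z).add_const _
      have := (hdg.hasFDerivAt.comp z h1).const_smul (K θ)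
      exact this.congr_fderiv (by simp)
    have main := hasFDerivAt_integral_of_dominated_loc_of_lip
      (𝕜 := ℂ) (μ := μ) (F := Fn) (F' := F') (x₀ := z₁)
      (bound := fun θ => ‖K θ‖ * C) (s := ball z₁ ρ) (ball_mem_nhds _ hρ0)
      ?_ ?_ ?_ ?_ ?_ ?_
    · -- use main to conclude
      obtain ⟨-, hJ⟩ := main
      have hDA : DifferentiableAt ℂ (fun z => ((2 * π * I : ℂ))⁻¹ • ∫ θ, Fn z θ ∂μ) z₁ :=
        hJ.differentiableAt.const_smul _
      refine (Filter.EventuallyEq.differentiableAt_iff ?_).2 hDA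
      have hball : ball z₁ ρ ∈ nhds z₁ := ball_mem_nhds _ hρ0
      refine Filter.eventuallyEq_of_mem hball fun z hz => ?_
      have hzρ : z ∈ closedBall z₁ ρ := ball_subset_closedBall hz
      -- Cauchy formula
      set φ : ℂ → F := fun s => g (z + s • u) with hφ
      have hφd : DifferentiableOn ℂ φ (closedBall 0 ρ) := by
        intro s hs
        have hdg : DifferentiableAt ℂ g (z + s • u) :=
          hg.differentiableAt (hΩ.mem_nhds (hrΩ (hmem z hzρ s
            (by simpa [mem_closedBall, dist_eq_norm] using hs))))
        exact (hdg.comp s (by fun_prop)).differentiableWithinAt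
      have hdc : DiffContOnCl ℂ φ (ball 0 ρ) := by
        refine DifferentiableOn.diffContOnCl ?_
        rwa [closure_ball 0 hρ0.ne']
      have hder : HasDerivAt φ (fderiv ℂ g z u) 0 := by
        have := slice_hasDerivAt (g := g) (z := z) u
          (hg.differentiableAt (hΩ.mem_nhds (hrΩ (closedBall_subset_closedBall
            (by linarith) hzρ)))) 0
        simpa [hφ] using this
      have hcauchy : deriv φ 0 = (2 * π * I : ℂ)⁻¹ • ∮ s in C(0, ρ), (s - 0) ^ (-2 : ℤ) • φ s := by
        rw [eq_inv_smul_iff₀ two_pi_I_ne_zero, ← hdc.deriv_eq_smul_circleIntegral hρ0]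
        simp [zpow_neg, one_div]
      rw [hder.deriv] at hcauchy
      show fderiv ℂ g z u = _
      rw [hcauchy]
      congr 1
      rw [circleIntegral_def_Icc]
      refine setIntegral_congr_fun measurableSet_Icc fun θ _ => ?_
      simp only [sub_zero, ← smul_smul, hFn, hK, smul_eq_mul, hφ]
    · -- hF_meas
      refine Filter.eventually_of_mem (closedBall_mem_nhds _ hρ0) fun z hz => ?_
      exact (hFncont z hz).aestronglyMeasurable
    · -- hF_int
      exact ((hFncont z₁ (mem_closedBall_self hρ0.le)).integrableOn_Icc)
    · -- hF'_meas
      refine StronglyMeasurable.aestronglyMeasurable ?_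
      refine (hKcont.stronglyMeasurable.smul ?_)
      refine Measurable.stronglyMeasurable ?_
      exact (measurable_fderiv ℂ g).comp (by fun_prop)
    · -- h_lip
      refine Filter.Eventually.of_forall fun θ => ?_
      have hlip : LipschitzOnWith (‖K θ‖₊ * C.toNNReal)
          (fun z => Fn z θ) (ball z₁ ρ) := by
        refine (convex_ball z₁ ρ).lipschitzOnWith_of_nnnorm_hasFDerivWithin_le
          (f' := fun z => K θ • fderiv ℂ g (z + circleMap 0 ρ θ • u))
          (fun z hz => ((hdgat z (ball_subset_closedBall hz) θ)).hasFDerivWithinAt)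
          fun z hz => ?_
        show ‖K θ • fderiv ℂ g (z + circleMap 0 ρ θ • u)‖₊ ≤ _
        have hb := hbd _ (hmem z (ball_subset_closedBall hz) _ (habs θ))
        have h2 : ‖K θ • fderiv ℂ g (z + circleMap 0 ρ θ • u)‖ ≤ ‖K θ‖ * C := by
          rw [norm_smul (K θ) (fderiv ℂ g (z + circleMap 0 ρ θ • u))]
          exact mul_le_mul_of_nonneg_left hb (norm_nonneg _)
        rw [← NNReal.coe_le_coe]
        calc ((‖K θ • fderiv ℂ g (z + circleMap 0 ρ θ • u)‖₊ : ℝ≥0) : ℝ)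
            = ‖K θ • fderiv ℂ g (z + circleMap 0 ρ θ • u)‖ := rfl
          _ ≤ ‖K θ‖ * C := h2
          _ = ((‖K θ‖₊ * C.toNNReal : ℝ≥0) : ℝ) := by
              push_cast
              rw [Real.coe_toNNReal _ hC0]
      refine LipschitzOnWith.mono ?_ (subset_refl _)
      have hKle : (‖K θ‖₊ * C.toNNReal) ≤ Real.nnabs (‖K θ‖ * C) := by
        rw [← NNReal.coe_le_coe]
        have h1 : ((Real.nnabs (‖K θ‖ * C) : ℝ≥0) : ℝ) = |‖K θ‖ * C| := Real.coe_nnabs _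
        rw [h1, _root_.abs_of_nonneg (by positivity)]
        push_cast
        rw [Real.coe_toNNReal _ hC0]
      exact fun x hx y hy => le_trans (hlip hx hy)
        (mul_le_mul_left (ENNReal.coe_le_coe.2 hKle) _)
    · -- bound integrable
      exact ((hKcont.norm.mul continuous_const).integrableOn_Icc)
    · -- h_diff
      exact Filter.Eventually.of_forall fun θ =>
        hdgat z₁ (mem_closedBall_self hρ0.le) θ
  -- assemble
  have hrepr : (fderiv ℂ g : E → E →L[ℂ] F) = fun z => ∑ i : Fin n,
      ContinuousLinearMap.smulRightL ℂ E F (ContinuousLinearMap.proj i)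
        (fderiv ℂ g z (sb i)) := by
    funext z
    apply ContinuousLinearMap.ext fun x => ?_
    have : ∀ i : Fin n, ContinuousLinearMap.smulRightL ℂ E F (ContinuousLinearMap.proj i)
        (fderiv ℂ g z (sb i)) x = x i • fderiv ℂ g z (sb i) := fun i => rfl
    rw [ContinuousLinearMap.sum_apply]
    simp only [this]
    conv_lhs => rw [pi_eq_sum_univ x, map_sum]
    exact Finset.sum_congr rfl fun i _ => by rw [(fderiv ℂ g z).map_smul]; rfl
  rw [hrepr]
  exact DifferentiableAt.fun_sum fun i _ =>
    (ContinuousLinearMap.smulRightL ℂ E F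
      (ContinuousLinearMap.proj i)).differentiableAt.comp z₁ (key i)

end

set_option maxHeartbeats 2000000 in
/-- Uniqueness of `f_α`: two normalized solutions of `P_g = α • P_f` agreeing with
their derivatives at a point of a connected open set coincide. -/
theorem falpha_unique (n : ℕ)
    (Ω : Set (Fin n → ℂ)) (hΩ : IsOpen Ω) (hconn : IsConnected Ω)
    (z₀ : Fin n → ℂ) (hz₀ : z₀ ∈ Ω) (α : ℂ)
    (f g h : (Fin n → ℂ) → (Fin n → ℂ))
    (hf : DifferentiableOn ℂ f Ω) (hg : DifferentiableOn ℂ g Ω)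
    (hh : DifferentiableOn ℂ h Ω)
    (hfinv : ∀ z ∈ Ω, ∃ e : (Fin n → ℂ) ≃L[ℂ] (Fin n → ℂ),
      (e : (Fin n → ℂ) →L[ℂ] (Fin n → ℂ)) = fderiv ℂ f z)
    (hginv : ∀ z ∈ Ω, ∃ e : (Fin n → ℂ) ≃L[ℂ] (Fin n → ℂ),
      (e : (Fin n → ℂ) →L[ℂ] (Fin n → ℂ)) = fderiv ℂ g z)
    (hhinv : ∀ z ∈ Ω, ∃ e : (Fin n → ℂ) ≃L[ℂ] (Fin n → ℂ),
      (e : (Fin n → ℂ) →L[ℂ] (Fin n → ℂ)) = fderiv ℂ h z)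
    (hpreg : ∀ z ∈ Ω, ∀ u v : Fin n → ℂ,
      (fderiv ℂ g z).inverse (fderiv ℂ (fderiv ℂ g) z u v) =
      α • (fderiv ℂ f z).inverse (fderiv ℂ (fderiv ℂ f) z u v))
    (hpreh : ∀ z ∈ Ω, ∀ u v : Fin n → ℂ,
      (fderiv ℂ h z).inverse (fderiv ℂ (fderiv ℂ h) z u v) =
      α • (fderiv ℂ f z).inverse (fderiv ℂ (fderiv ℂ f) z u v))
    (h0 : g z₀ = h z₀) (h1 : fderiv ℂ g z₀ = fderiv ℂ h z₀) :
    EqOn g h Ω := by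
  classical
  have hDf : ∀ z ∈ Ω, DifferentiableAt ℂ (fderiv ℂ f) z :=
    fun z hz => fderiv_differentiableAt hΩ hf hz
  have hDg : ∀ z ∈ Ω, DifferentiableAt ℂ (fderiv ℂ g) z :=
    fun z hz => fderiv_differentiableAt hΩ hg hz
  have hDh : ∀ z ∈ Ω, DifferentiableAt ℂ (fderiv ℂ h) z :=
    fun z hz => fderiv_differentiableAt hΩ hh hz
  have hDfOn : DifferentiableOn ℂ (fderiv ℂ f) Ω :=
    fun z hz => (hDf z hz).differentiableWithinAt
  haveI : FiniteDimensional ℂ ((Fin n → ℂ) →L[ℂ] (Fin n → ℂ)) := by infer_instance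
  have hD2f : ∀ z ∈ Ω, DifferentiableAt ℂ (fderiv ℂ (fderiv ℂ f)) z :=
    fun z hz => fderiv_differentiableAt (F := (Fin n → ℂ) →L[ℂ] (Fin n → ℂ)) hΩ hDfOn hz
  set N : (Fin n → ℂ) → (Fin n → ℂ) →L[ℂ] (Fin n → ℂ) :=
    fun z => (fderiv ℂ f z).inverse with hNdef
  have hNc : ContinuousOn N Ω := by
    intro z hz
    obtain ⟨e, he⟩ := hfinv z hz
    have heq : N = Ring.inverse ∘ (fderiv ℂ f) := by
      funext ζ
      simp [hNdef, ContinuousLinearMap.ringInverse_eq_inverse, Function.comp]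
    rw [heq]
    refine ContinuousAt.continuousWithinAt ?_
    refine ContinuousAt.comp ?_ (hDf z hz).continuousAt
    have : fderiv ℂ f z = ((e.toUnit : ((Fin n → ℂ) →L[ℂ] (Fin n → ℂ))ˣ) :
        (Fin n → ℂ) →L[ℂ] (Fin n → ℂ)) := by
      simp [ContinuousLinearEquiv.toUnit, he]
    rw [this]
    exact NormedRing.inverse_continuousAt _
  have hD2fc : ContinuousOn (fderiv ℂ (fderiv ℂ f)) Ω :=
    fun z hz => (hD2f z hz).continuousAt.continuousWithinAt
  -- key structural identities
  have keyg : ∀ z ∈ Ω, ∀ w : Fin n → ℂ, fderiv ℂ (fderiv ℂ g) z w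
      = (fderiv ℂ g z).comp (α • (N z).comp (fderiv ℂ (fderiv ℂ f) z w)) := by
    intro z hz w
    obtain ⟨e, he⟩ := hginv z hz
    apply ContinuousLinearMap.ext fun v => ?_
    have h1 := hpreg z hz w v
    have h2 : (fderiv ℂ g z).inverse = (e.symm : (Fin n → ℂ) →L[ℂ] (Fin n → ℂ)) := by
      rw [← he, ContinuousLinearMap.inverse_equiv]
    rw [h2] at h1
    have h4 : ((fderiv ℂ g z).comp (α • (N z).comp (fderiv ℂ (fderiv ℂ f) z w))) v
        = e (α • (fderiv ℂ f z).inverse (fderiv ℂ (fderiv ℂ f) z w v)) := by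
      rw [← he]; rfl
    rw [h4, ← h1]
    exact (e.apply_symm_apply _).symm
  have keyh : ∀ z ∈ Ω, ∀ w : Fin n → ℂ, fderiv ℂ (fderiv ℂ h) z w
      = (fderiv ℂ h z).comp (α • (N z).comp (fderiv ℂ (fderiv ℂ f) z w)) := by
    intro z hz w
    obtain ⟨e, he⟩ := hhinv z hz
    apply ContinuousLinearMap.ext fun v => ?_
    have h1 := hpreh z hz w v
    have h2 : (fderiv ℂ h z).inverse = (e.symm : (Fin n → ℂ) →L[ℂ] (Fin n → ℂ)) := by
      rw [← he, ContinuousLinearMap.inverse_equiv]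
    rw [h2] at h1
    have h4 : ((fderiv ℂ h z).comp (α • (N z).comp (fderiv ℂ (fderiv ℂ f) z w))) v
        = e (α • (fderiv ℂ f z).inverse (fderiv ℂ (fderiv ℂ f) z w v)) := by
      rw [← he]; rfl
    rw [h4, ← h1]
    exact (e.apply_symm_apply _).symm
  -- the set S
  set S : Set (Fin n → ℂ) :=
    {z | z ∈ Ω ∧ g z = h z ∧ fderiv ℂ g z = fderiv ℂ h z} with hSdef
  have hSopen : IsOpen S := by
    rw [Metric.isOpen_iff]
    rintro z₁ ⟨hz₁Ω, hval, hder⟩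
    obtain ⟨r, hr0, hrΩ⟩ := Metric.isOpen_iff.1 hΩ z₁ hz₁Ω
    refine ⟨r, hr0, ?_⟩
    intro z hzball
    set w : Fin n → ℂ := z - z₁ with hw
    set γ : ℝ → (Fin n → ℂ) := fun t => z₁ + t • w with hγ
    have hwr : ‖w‖ < r := by
      rw [hw]; exact mem_ball_iff_norm.1 hzball
    have hγmem : ∀ t ∈ Icc (0:ℝ) 1, γ t ∈ ball z₁ r := by
      intro t ht
      simp only [hγ, mem_ball, dist_eq_norm, add_sub_cancel_left]
      calc ‖t • w‖ = |t| * ‖w‖ := by rw [norm_smul, Real.norm_eq_abs]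
        _ ≤ 1 * ‖w‖ := by
            refine mul_le_mul_of_nonneg_right ?_ (norm_nonneg _)
            rw [_root_.abs_of_nonneg ht.1]; exact ht.2
        _ = ‖w‖ := one_mul _
        _ < r := hwr
    have hγΩ : ∀ t ∈ Icc (0:ℝ) 1, γ t ∈ Ω := fun t ht => hrΩ (hγmem t ht)
    have hγcont : Continuous γ := by fun_prop
    -- Q along the segment
    set Qf : (Fin n → ℂ) → (Fin n → ℂ) →L[ℂ] (Fin n → ℂ) :=
      fun ζ => α • (N ζ).comp (fderiv ℂ (fderiv ℂ f) ζ w) with hQf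
    have hQfc : ContinuousOn Qf Ω :=
      (hNc.clm_comp (hD2fc.clm_apply continuousOn_const)).const_smul α
    obtain ⟨C, hC⟩ := isCompact_Icc.exists_bound_of_continuousOn
      (hQfc.comp hγcont.continuousOn (fun t ht => hγΩ t ht))
    -- clamp time to [0,1]
    set cl : ℝ → ℝ := fun t => max 0 (min 1 t) with hcl
    have hclmem : ∀ t : ℝ, cl t ∈ Icc (0:ℝ) 1 :=
      fun t => ⟨le_max_left _ _, max_le zero_le_one (min_le_left _ _)⟩
    have hcl_eq : ∀ t ∈ Icc (0:ℝ) 1, cl t = t := by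
      intro t ht
      simp only [hcl]
      rw [min_eq_right ht.2, max_eq_right ht.1]
    set K : NNReal := ⟨max ‖w‖ (max C 0), le_max_of_le_right (le_max_right _ _)⟩ with hK
    set V : ℝ → ((Fin n → ℂ) × ((Fin n → ℂ) →L[ℂ] (Fin n → ℂ)))
        → ((Fin n → ℂ) × ((Fin n → ℂ) →L[ℂ] (Fin n → ℂ))) :=
      fun t p => (p.2 w, p.2.comp (Qf (γ (cl t)))) with hV
    have hQbd : ∀ t : ℝ, ‖Qf (γ (cl t))‖ ≤ (K : ℝ) := by
      intro t
      refine le_trans (hC (cl t) (hclmem t)) ?_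
      exact le_trans (le_max_left C 0) (le_max_right _ _)
    have hlip : ∀ t, LipschitzWith K (V t) := by
      intro t
      refine LipschitzWith.of_dist_le_mul fun p q => ?_
      have hsub2 : dist p.2 q.2 ≤ dist p q := le_max_right _ _
      rw [Prod.dist_eq]
      refine max_le ?_ ?_
      · rw [dist_eq_norm]
        have : p.2 w - q.2 w = (p.2 - q.2) w := rfl
        rw [this]
        calc ‖(p.2 - q.2) w‖ ≤ ‖p.2 - q.2‖ * ‖w‖ := ContinuousLinearMap.le_opNorm _ _
          _ ≤ dist p q * ‖w‖ := by
              refine mul_le_mul_of_nonneg_right ?_ (norm_nonneg _)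
              rw [← dist_eq_norm]; exact hsub2
          _ ≤ dist p q * (K : ℝ) := by
              refine mul_le_mul_of_nonneg_left ?_ dist_nonneg
              exact le_max_left _ _
          _ = (K : ℝ) * dist p q := mul_comm _ _
      · rw [dist_eq_norm]
        have : p.2.comp (Qf (γ (cl t))) - q.2.comp (Qf (γ (cl t)))
            = (p.2 - q.2).comp (Qf (γ (cl t))) := by
          ext v; simp [ContinuousLinearMap.comp_apply]
        rw [this]
        calc ‖(p.2 - q.2).comp (Qf (γ (cl t)))‖
            ≤ ‖p.2 - q.2‖ * ‖Qf (γ (cl t))‖ := ContinuousLinearMap.opNorm_comp_le _ _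
          _ ≤ dist p q * (K : ℝ) := by
              refine mul_le_mul ?_ (hQbd t) (norm_nonneg _) dist_nonneg
              rw [← dist_eq_norm]; exact hsub2
          _ = (K : ℝ) * dist p q := mul_comm _ _
    -- the two solutions
    set Y : ℝ → ((Fin n → ℂ) × ((Fin n → ℂ) →L[ℂ] (Fin n → ℂ))) :=
      fun t => (g (γ t), fderiv ℂ g (γ t)) with hY
    set Z : ℝ → ((Fin n → ℂ) × ((Fin n → ℂ) →L[ℂ] (Fin n → ℂ))) :=
      fun t => (h (γ t), fderiv ℂ h (γ t)) with hZ
    have hγder : ∀ t : ℝ, HasDerivAt γ w t := by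
      intro t
      have h1 : HasDerivAt (fun s : ℝ => s • w) ((1:ℝ) • w) t := by
        exact (hasDerivAt_id t).smul_const w
      simpa [hγ] using h1.const_add z₁
    have hYder : ∀ t ∈ Icc (0:ℝ) 1, HasDerivAt Y (V t (Y t)) t := by
      intro t ht
      have hγt : γ t ∈ Ω := hγΩ t ht
      have hg1 : HasDerivAt (fun s => g (γ s)) (fderiv ℂ g (γ t) w) t := by
        have := ((hg.differentiableAt (hΩ.mem_nhds hγt)).hasFDerivAt.restrictScalars
          ℝ).comp_hasDerivAt t (hγder t)
        simpa [Function.comp_def] using this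
      have hg2 : HasDerivAt (fun s => fderiv ℂ g (γ s))
          ((fderiv ℂ g (γ t)).comp (Qf (γ (cl t)))) t := by
        have hD := ((hDg (γ t) hγt).hasFDerivAt.restrictScalars ℝ).comp_hasDerivAt t (hγder t)
        have : fderiv ℂ (fderiv ℂ g) (γ t) w
            = (fderiv ℂ g (γ t)).comp (Qf (γ (cl t))) := by
          rw [hcl_eq t ht]
          exact keyg (γ t) hγt w
        rw [← this]
        simpa [Function.comp_def] using hD
      exact hg1.prodMk hg2
    have hZder : ∀ t ∈ Icc (0:ℝ) 1, HasDerivAt Z (V t (Z t)) t := by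
      intro t ht
      have hγt : γ t ∈ Ω := hγΩ t ht
      have hg1 : HasDerivAt (fun s => h (γ s)) (fderiv ℂ h (γ t) w) t := by
        have := ((hh.differentiableAt (hΩ.mem_nhds hγt)).hasFDerivAt.restrictScalars
          ℝ).comp_hasDerivAt t (hγder t)
        simpa [Function.comp_def] using this
      have hg2 : HasDerivAt (fun s => fderiv ℂ h (γ s))
          ((fderiv ℂ h (γ t)).comp (Qf (γ (cl t)))) t := by
        have hD := ((hDh (γ t) hγt).hasFDerivAt.restrictScalars ℝ).comp_hasDerivAt t (hγder t)
        have : fderiv ℂ (fderiv ℂ h) (γ t) w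
            = (fderiv ℂ h (γ t)).comp (Qf (γ (cl t))) := by
          rw [hcl_eq t ht]
          exact keyh (γ t) hγt w
        rw [← this]
        simpa [Function.comp_def] using hD
      exact hg1.prodMk hg2
    have hY0 : Y 0 = Z 0 := by
      have : γ 0 = z₁ := by simp [hγ]
      simp [hY, hZ, this, hval, hder]
    have heq := ODE_solution_unique hlip
      (fun t ht => (hYder t ht).continuousAt.continuousWithinAt)
      (fun t ht => (hYder t (Ico_subset_Icc_self ht)).hasDerivWithinAt)
      (fun t ht => (hZder t ht).continuousAt.continuousWithinAt)
      (fun t ht => (hZder t (Ico_subset_Icc_self ht)).hasDerivWithinAt)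
      hY0
    have h1t := heq (right_mem_Icc.2 zero_le_one)
    have hγ1 : γ 1 = z := by simp [hγ, hw]
    have hY1 : Y 1 = (g z, fderiv ℂ g z) := by rw [hY]; simp only [hγ1]
    have hZ1 : Z 1 = (h z, fderiv ℂ h z) := by rw [hZ]; simp only [hγ1]
    rw [hY1, hZ1] at h1t
    exact ⟨hrΩ hzball, congrArg Prod.fst h1t, congrArg Prod.snd h1t⟩
  -- the complement is open in Ω
  set U : Set (Fin n → ℂ) := {z | z ∈ Ω ∧ z ∉ S} with hUdef
  have hUopen : IsOpen U := by
    rw [isOpen_iff_mem_nhds]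
    rintro z ⟨hzΩ, hzS⟩
    have hp : ContinuousAt (fun ζ => (g ζ - h ζ, fderiv ℂ g ζ - fderiv ℂ h ζ)) z := by
      refine ContinuousAt.prodMk ?_ ?_
      · exact ((hg.differentiableAt (hΩ.mem_nhds hzΩ)).continuousAt).sub
          ((hh.differentiableAt (hΩ.mem_nhds hzΩ)).continuousAt)
      · exact ((hDg z hzΩ).continuousAt).sub ((hDh z hzΩ).continuousAt)
    have hpne : (g z - h z, fderiv ℂ g z - fderiv ℂ h z) ≠ 0 := by
      intro hcontra
      refine hzS ⟨hzΩ, ?_, ?_⟩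
      · have := congrArg Prod.fst hcontra
        simpa [sub_eq_zero] using this
      · have := congrArg Prod.snd hcontra
        simpa [sub_eq_zero] using this
    have hev := hp.eventually_ne hpne
    filter_upwards [hev, hΩ.mem_nhds hzΩ] with ζ hζne hζΩ
    refine ⟨hζΩ, fun hζS => hζne ?_⟩
    rw [Prod.mk_eq_zero]
    constructor
    · rw [sub_eq_zero]; exact hζS.2.1
    · rw [sub_eq_zero]; exact hζS.2.2
  -- connectedness
  have hΩS : Ω ⊆ S := by
    by_contra hns
    obtain ⟨z, hzΩ, hzS⟩ := not_subset.1 hns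
    obtain ⟨y, hyΩ, hyS, hyU⟩ := hconn.isPreconnected S U hSopen hUopen
      (fun ζ hζ => by
        by_cases hζS : ζ ∈ S
        · exact Or.inl hζS
        · exact Or.inr ⟨hζ, hζS⟩)
      ⟨z₀, hz₀, hz₀, h0, h1⟩ ⟨z, hzΩ, hzΩ, hzS⟩
    exact hyU.2 hyS
  exact fun z hz => (hΩS hz).2.1
end

section
/- Let f be holomorphic on the unit disk 𝔻 with nonvanishing derivative, f(0)=0, f'(0)=1, and let F : 𝔹² → ℂ² be the Roper–Suffridge extension F(z₁,z₂) = (f(z₁), √(f'(z₁)) · z₂), where √(f'(z₁)) = exp(½ log f'(z₁)) with log f'(0)=0. Then DF(z) is invertible for all z ∈ 𝔹², and the pre-Schwarzian of F satisfies: DF(z)⁻¹ D²F(z)(v, w) has first component (f''/f')(z₁) v₁ w₁ and second component (½ z₂ Sf(z₁)) v₁ w₁ + ½ (f''/f')(z₁)(v₁ w₂ + v₂ w₁), where Sf = (f''/f')' − ½ (f''/f')² is the Schwarzian derivative of f. -/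
open Complex Metric Set

set_option maxHeartbeats 1000000
set_option synthInstance.maxHeartbeats 400000

/-- Pre-Schwarzian of the Roper–Suffridge extension
`F(z₁,z₂) = (f(z₁), √(f'(z₁))·z₂)`, where `√(f'(z₁)) = exp(½ L(z₁))` for the
holomorphic logarithm `L` of `f'` with `L 0 = 0`. -/
theorem roperSuffridge_preSchwarzian (f : ℂ → ℂ)
    (hf : DifferentiableOn ℂ f (ball (0:ℂ) 1))
    (hf' : ∀ z ∈ ball (0:ℂ) 1, deriv f z ≠ 0)
    (hf0 : f 0 = 0) (hf'0 : deriv f 0 = 1)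
    (L : ℂ → ℂ)
    (hL : DifferentiableOn ℂ L (ball (0:ℂ) 1))
    (hLexp : ∀ z ∈ ball (0:ℂ) 1, Complex.exp (L z) = deriv f z)
    (hL0 : L 0 = 0)
    (F : (Fin 2 → ℂ) → (Fin 2 → ℂ))
    (hF : ∀ z : Fin 2 → ℂ, F z = ![f (z 0), Complex.exp ((1/2 : ℂ) * L (z 0)) * z 1]) :
    ∀ z : Fin 2 → ℂ, ‖z 0‖ ^ 2 + ‖z 1‖ ^ 2 < 1 →
      (∃ e : (Fin 2 → ℂ) ≃L[ℂ] (Fin 2 → ℂ),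
        (e : (Fin 2 → ℂ) →L[ℂ] (Fin 2 → ℂ)) = fderiv ℂ F z) ∧
      ∀ v w : Fin 2 → ℂ,
        ((fderiv ℂ F z).inverse (fderiv ℂ (fderiv ℂ F) z v w)) 0 =
          (deriv (deriv f) (z 0) / deriv f (z 0)) * v 0 * w 0 ∧
        ((fderiv ℂ F z).inverse (fderiv ℂ (fderiv ℂ F) z v w)) 1 =
          ((1/2 : ℂ) * z 1 *
              (deriv (fun t => deriv (deriv f) t / deriv f t) (z 0) -
                (1/2 : ℂ) * (deriv (deriv f) (z 0) / deriv f (z 0)) ^ 2)) * v 0 * w 0 +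
            (1/2 : ℂ) * (deriv (deriv f) (z 0) / deriv f (z 0)) *
              (v 0 * w 1 + v 1 * w 0) := by
  intro z hz
  have hz0 : z 0 ∈ ball (0:ℂ) 1 := by
    rw [mem_ball_zero_iff]
    nlinarith [norm_nonneg (z 0), norm_nonneg (z 1),
      sq_nonneg (‖z 1‖)]
  have hop : IsOpen (ball (0:ℂ) 1) := isOpen_ball
  -- scalar derivative facts
  have hfd : ∀ s ∈ ball (0:ℂ) 1, HasDerivAt f (deriv f s) s := fun s hs =>
    (hf.differentiableAt (hop.mem_nhds hs)).hasDerivAt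
  have hLd : ∀ s ∈ ball (0:ℂ) 1, HasDerivAt L (deriv L s) s := fun s hs =>
    (hL.differentiableAt (hop.mem_nhds hs)).hasDerivAt
  have hLan : AnalyticOnNhd ℂ (deriv L) (ball (0:ℂ) 1) := (hL.analyticOnNhd hop).deriv
  have hL1d : ∀ s ∈ ball (0:ℂ) 1, HasDerivAt (deriv L) (deriv (deriv L) s) s := fun s hs =>
    (hLan s hs).differentiableAt.hasDerivAt
  have hf'd : ∀ s ∈ ball (0:ℂ) 1, HasDerivAt (deriv f) (deriv f s * deriv L s) s := by
    intro s hs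
    have h1 : HasDerivAt (fun u => Complex.exp (L u)) (Complex.exp (L s) * deriv L s) s :=
      (hLd s hs).cexp
    have h2 : deriv f =ᶠ[nhds s] (fun u => Complex.exp (L u)) :=
      Filter.eventually_of_mem (hop.mem_nhds hs) (fun u hu => (hLexp u hu).symm)
    have h3 := h1.congr_of_eventuallyEq h2
    rwa [hLexp s hs] at h3
  have hrat : ∀ s ∈ ball (0:ℂ) 1, deriv (deriv f) s / deriv f s = deriv L s := by
    intro s hs
    rw [(hf'd s hs).deriv]
    field_simp [hf' s hs]
  have hQ : deriv (fun s => deriv (deriv f) s / deriv f s) (z 0) = deriv (deriv L) (z 0) := by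
    have h2 : (fun s => deriv (deriv f) s / deriv f s) =ᶠ[nhds (z 0)] deriv L :=
      Filter.eventually_of_mem (hop.mem_nhds hz0) (fun u hu => hrat u hu)
    exact h2.deriv_eq
  -- the square-root factor and its derivatives
  set g : ℂ → ℂ := fun s => Complex.exp ((1/2 : ℂ) * L s) with hg
  set g1 : ℂ → ℂ := fun s => (1/2 : ℂ) * deriv L s * g s with hg1
  set g2 : ℂ → ℂ := fun s => ((1/2 : ℂ) * deriv (deriv L) s
      + (1/4 : ℂ) * (deriv L s) ^ 2) * g s with hg2
  have hgne : ∀ s, g s ≠ 0 := fun s => Complex.exp_ne_zero _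
  have hgd : ∀ s ∈ ball (0:ℂ) 1, HasDerivAt g (g1 s) s := by
    intro s hs
    have h := ((hLd s hs).const_mul ((1:ℂ)/2)).cexp
    refine h.congr_deriv ?_
    simp only [hg1, hg]
    ring
  have hg1d : ∀ s ∈ ball (0:ℂ) 1, HasDerivAt g1 (g2 s) s := by
    intro s hs
    have h := ((hL1d s hs).const_mul ((1:ℂ)/2)).mul (hgd s hs)
    refine h.congr_deriv ?_
    simp only [hg2, hg1]
    ring
  -- continuous linear map machinery
  set pr0 : (Fin 2 → ℂ) →L[ℂ] ℂ := ContinuousLinearMap.proj 0 with hpr0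
  set pr1 : (Fin 2 → ℂ) →L[ℂ] ℂ := ContinuousLinearMap.proj 1 with hpr1
  set e0 : Fin 2 → ℂ := Pi.single 0 1 with he0
  set e1 : Fin 2 → ℂ := Pi.single 1 1 with he1
  set T : Fin 2 → Fin 2 → ((Fin 2 → ℂ) →L[ℂ] (Fin 2 → ℂ)) := fun i j =>
    (ContinuousLinearMap.proj j).smulRight (Pi.single i 1) with hT
  set A : (Fin 2 → ℂ) → ((Fin 2 → ℂ) →L[ℂ] (Fin 2 → ℂ)) := fun y =>
    deriv f (y 0) • T 0 0 + (g1 (y 0) * y 1) • T 1 0 + g (y 0) • T 1 1 with hA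
  have hp0 : HasFDerivAt (fun w : Fin 2 → ℂ => w 0) pr0 z := pr0.hasFDerivAt
  have hp1 : HasFDerivAt (fun w : Fin 2 → ℂ => w 1) pr1 z := pr1.hasFDerivAt
  -- first derivative of F
  have hFd : ∀ y : Fin 2 → ℂ, y 0 ∈ ball (0:ℂ) 1 → HasFDerivAt F (A y) y := by
    intro y hy
    have hp0y : HasFDerivAt (fun w : Fin 2 → ℂ => w 0) pr0 y := pr0.hasFDerivAt
    have hp1y : HasFDerivAt (fun w : Fin 2 → ℂ => w 1) pr1 y := pr1.hasFDerivAt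
    have hc0 : HasFDerivAt (fun w : Fin 2 → ℂ => f (w 0)) (deriv f (y 0) • pr0) y :=
      (hfd (y 0) hy).comp_hasFDerivAt y hp0y
    have hcg : HasFDerivAt (fun w : Fin 2 → ℂ => g (w 0)) (g1 (y 0) • pr0) y := by
      have := (hgd (y 0) hy).comp_hasFDerivAt y hp0y; exact this
    have hc1 : HasFDerivAt (fun w : Fin 2 → ℂ => g (w 0) * w 1)
        (g (y 0) • pr1 + y 1 • (g1 (y 0) • pr0)) y := hcg.mul hp1y
    have hFeq : F = fun w : Fin 2 → ℂ =>
        f (w 0) • e0 + (g (w 0) * w 1) • e1 := by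
      funext w
      rw [hF w]
      funext i
      fin_cases i <;> simp [hg, he0, he1, Pi.single_apply]
    have hsum := (hc0.smul_const e0).add (hc1.smul_const e1)
    rw [hFeq]
    refine hsum.congr_fderiv ?_
    symm
    ext v i
    fin_cases i <;>
      simp [hA, hT, he0, he1, hpr0, hpr1, Pi.single_apply] <;> (try ring)
  have hfdF : ∀ y : Fin 2 → ℂ, y 0 ∈ ball (0:ℂ) 1 → fderiv ℂ F y = A y := fun y hy =>
    (hFd y hy).fderiv
  -- second derivative of F
  set Bz : (Fin 2 → ℂ) →L[ℂ] ((Fin 2 → ℂ) →L[ℂ] (Fin 2 → ℂ)) :=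
    (((deriv f (z 0) * deriv L (z 0)) • pr0).smulRight (T 0 0)
      + (g1 (z 0) • pr1 + z 1 • (g2 (z 0) • pr0)).smulRight (T 1 0))
      + (g1 (z 0) • pr0).smulRight (T 1 1) with hBz
  have hAd : HasFDerivAt A Bz z := by
    have h1 : HasFDerivAt (fun y : Fin 2 → ℂ => deriv f (y 0))
        ((deriv f (z 0) * deriv L (z 0)) • pr0) z := by
      have := (hf'd (z 0) hz0).comp_hasFDerivAt z hp0; exact this
    have h2 : HasFDerivAt (fun y : Fin 2 → ℂ => g1 (y 0) * y 1)
        (g1 (z 0) • pr1 + z 1 • (g2 (z 0) • pr0)) z := by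
      have := ((hg1d (z 0) hz0).comp_hasFDerivAt z hp0).mul hp1; exact this
    have h3 : HasFDerivAt (fun y : Fin 2 → ℂ => g (y 0)) (g1 (z 0) • pr0) z := by
      have := (hgd (z 0) hz0).comp_hasFDerivAt z hp0; exact this
    exact ((h1.smul_const (T 0 0)).add (h2.smul_const (T 1 0))).add (h3.smul_const (T 1 1))
  have hev : fderiv ℂ F =ᶠ[nhds z] A := by
    have hUopen : IsOpen {y : Fin 2 → ℂ | y 0 ∈ ball (0:ℂ) 1} :=
      hop.preimage (continuous_apply 0)
    exact Filter.eventually_of_mem (hUopen.mem_nhds hz0) (fun y hy => hfdF y hy)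
  have hsnd : fderiv ℂ (fderiv ℂ F) z = Bz := by
    rw [hev.fderiv_eq]
    exact hAd.fderiv
  -- inverse
  have hane : deriv f (z 0) ≠ 0 := hf' _ hz0
  have hdne : g (z 0) ≠ 0 := hgne _
  set Ainv : (Fin 2 → ℂ) →L[ℂ] (Fin 2 → ℂ) :=
    (deriv f (z 0))⁻¹ • T 0 0
      + (-(g1 (z 0) * z 1) / (deriv f (z 0) * g (z 0))) • T 1 0
      + (g (z 0))⁻¹ • T 1 1 with hAinv
  have hli : Function.LeftInverse Ainv (A z) := by
    intro x
    funext i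
    fin_cases i <;>
      (simp [hAinv, hA, hT, he0, he1, hpr0, hpr1, Pi.single_apply] <;>
        (try field_simp) <;> (try ring))
  have hri : Function.RightInverse Ainv (A z) := by
    intro x
    funext i
    fin_cases i <;>
      (simp [hAinv, hA, hT, he0, he1, hpr0, hpr1, Pi.single_apply] <;>
        (try field_simp) <;> (try ring))
  set eqv := ContinuousLinearEquiv.equivOfInverse (A z) Ainv hli hri with heqv
  have hinv : (fderiv ℂ F z).inverse = Ainv := by
    rw [hfdF z hz0]
    have h1 : (A z) = (eqv : (Fin 2 → ℂ) →L[ℂ] (Fin 2 → ℂ)) := rfl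
    rw [h1, ContinuousLinearMap.inverse_equiv]
    rfl
  constructor
  · refine ⟨eqv, ?_⟩
    rw [hfdF z hz0]
    rfl
  · intro v w
    rw [hsnd, hinv, hrat (z 0) hz0, hQ]
    constructor
    · simp [hBz, hAinv, hT, he0, he1, hpr0, hpr1, Pi.single_apply]
      field_simp
    · simp [hBz, hAinv, hT, hg1, hg2, he0, he1, hpr0, hpr1, Pi.single_apply]
      field_simp
      ring
end
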